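/- There exists a constant C > 0, depending only on q, such that for all n ∈ ½ℤ₊ with n ≥ 1/2 and all half-integers i ∈ {−n, …, n} and j with −n−1/2 ≤ j ≤ n+1/2, one has 0 ≤ q^{(i+j−1/2)/2}[n−i]^{1/2} · q^{1/2}[n+j+1/2]^{1/2}/([2n][2n+1]) ≤ C·q^{2n}. -/

import Mathlib

noncomputable section

open Real

/-- The q-number `[m] = (q^m - q^(-m))/(q - q⁻¹)`. -/
def qnum (q m : ℝ) : ℝ := (q ^ m - q ^ (-m)) / (q - q⁻¹)

/-- The 2×2 matrix `a⁺_{nij}`. -/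
def aP (q n i j : ℝ) : Matrix (Fin 2) (Fin 2) ℝ :=
  (q ^ ((i + j - 1/2) / 2) * Real.sqrt (qnum q (n + i + 1))) •
    !![q ^ (-n - 1/2) * Real.sqrt (qnum q (n + j + 3/2)) / qnum q (2*n + 2), 0;
       q ^ ((1:ℝ)/2) * Real.sqrt (qnum q (n - j + 1/2)) / (qnum q (2*n + 1) * qnum q (2*n + 2)),
       q ^ (-n) * Real.sqrt (qnum q (n + j + 1/2)) / qnum q (2*n + 1)]

/-- The 2×2 matrix `a⁻_{nij}`. -/
def aM (q n i j : ℝ) : Matrix (Fin 2) (Fin 2) ℝ :=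
  (q ^ ((i + j - 1/2) / 2) * Real.sqrt (qnum q (n - i))) •
    !![q ^ (n + 1) * Real.sqrt (qnum q (n - j + 1/2)) / qnum q (2*n + 1),
       -(q ^ ((1:ℝ)/2) * Real.sqrt (qnum q (n + j + 1/2)) / (qnum q (2*n) * qnum q (2*n + 1)));
       0, q ^ (n + 1/2) * Real.sqrt (qnum q (n - j - 1/2)) / qnum q (2*n)]

/-- The 2×2 matrix `b⁺_{nij}`. -/
def bP (q n i j : ℝ) : Matrix (Fin 2) (Fin 2) ℝ :=
  (q ^ ((i + j - 1/2) / 2) * Real.sqrt (qnum q (n + i + 1))) •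
    !![Real.sqrt (qnum q (n - j + 3/2)) / qnum q (2*n + 2), 0;
       -(q ^ (-n - 1) * Real.sqrt (qnum q (n + j + 1/2)) / (qnum q (2*n + 1) * qnum q (2*n + 2))),
       q ^ (-(1:ℝ)/2) * Real.sqrt (qnum q (n - j + 1/2)) / qnum q (2*n + 1)]

/-- The 2×2 matrix `b⁻_{nij}`. -/
def bM (q n i j : ℝ) : Matrix (Fin 2) (Fin 2) ℝ :=
  (q ^ ((i + j - 1/2) / 2) * Real.sqrt (qnum q (n - i))) •
    !![-(q ^ (-(1:ℝ)/2) * Real.sqrt (qnum q (n + j + 1/2)) / qnum q (2*n + 1)),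
       -(q ^ n * Real.sqrt (qnum q (n - j + 1/2)) / (qnum q (2*n) * qnum q (2*n + 1)));
       0, -(Real.sqrt (qnum q (n + j - 1/2)) / qnum q (2*n))]

/-- `n` is a nonnegative half-integer: `n ∈ ½ℤ₊ = {0, 1/2, 1, 3/2, …}`. -/
def HalfNat (n : ℝ) : Prop := ∃ N : ℕ, (N : ℝ) = 2 * n

/-- `i ∈ {-n, -n+1, …, n}`. -/
def IdxRange (n i : ℝ) : Prop := (∃ k : ℕ, (k : ℝ) = i + n) ∧ i ≤ n

/-- `j ∈ {-n+1/2, -n+3/2, …, n-1/2}`. -/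
def JRangeIn (n j : ℝ) : Prop := (∃ k : ℕ, (k : ℝ) = j + n - 1/2) ∧ j ≤ n - 1/2

/-- `j ∈ {-n-1/2, -n+1/2, …, n+1/2}`. -/
def JRangeOut (n j : ℝ) : Prop := (∃ k : ℕ, (k : ℝ) = j + n + 1/2) ∧ j ≤ n + 1/2


/-- Auxiliary: `q⁻¹ - q > 0` for `0 < q < 1`. -/
lemma qq_pos' {q : ℝ} (hq0 : 0 < q) (hq1 : q < 1) : 0 < q⁻¹ - q := by
  rw [sub_pos, ← one_div, lt_div_iff₀ hq0]; nlinarith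

lemma qnum_eq' (q m : ℝ) : qnum q m = (q ^ (-m) - q ^ m) / (q⁻¹ - q) := by
  rw [qnum, show q ^ m - q ^ (-m) = -(q ^ (-m) - q ^ m) by ring,
    show q - q⁻¹ = -(q⁻¹ - q) by ring, neg_div_neg_eq]

lemma qnum_pos' {q : ℝ} (hq0 : 0 < q) (hq1 : q < 1) {m : ℝ} (hm : 0 < m) : 0 < qnum q m := by
  rw [qnum_eq']
  exact div_pos (sub_pos.2 (Real.rpow_lt_rpow_of_exponent_gt hq0 hq1 (by linarith)))
    (qq_pos' hq0 hq1)

lemma qnum_ge' {q : ℝ} (hq0 : 0 < q) (hq1 : q < 1) {m : ℝ} (hm : 1 ≤ m) :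
    q ^ (1 - m) ≤ qnum q m := by
  rw [qnum_eq', le_div_iff₀ (qq_pos' hq0 hq1)]
  have h1 : q ^ (1 - m) * q⁻¹ = q ^ (-m) := by
    rw [← Real.rpow_neg_one q, ← Real.rpow_add hq0]; ring_nf
  have h2 : q ^ (1 - m) * q = q ^ (2 - m) := by
    nth_rewrite 2 [← Real.rpow_one q]
    rw [← Real.rpow_add hq0]; ring_nf
  have h3 : q ^ m ≤ q ^ (2 - m) :=
    Real.rpow_le_rpow_of_exponent_ge hq0 hq1.le (by linarith)
  rw [mul_sub, h1, h2]; linarith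

lemma qnum_le' {q : ℝ} (hq0 : 0 < q) (hq1 : q < 1) (m : ℝ) :
    qnum q m ≤ q ^ (1 - m) / (1 - q ^ 2) := by
  have h2 : 0 < 1 - q ^ 2 := by nlinarith
  have hd : q⁻¹ - q = (1 - q ^ 2) / q := by field_simp
  rw [qnum_eq', hd, div_div_eq_mul_div]
  have h1 : q ^ (-m) * q = q ^ (1 - m) := by
    nth_rewrite 2 [← Real.rpow_one q]
    rw [← Real.rpow_add hq0]; ring_nf
  gcongr
  have := Real.rpow_pos_of_pos hq0 m
  nlinarith

lemma sqrt_qnum_le' {q : ℝ} (hq0 : 0 < q) (hq1 : q < 1) (m : ℝ) :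
    Real.sqrt (qnum q m) ≤ q ^ ((1 - m) / 2) / Real.sqrt (1 - q ^ 2) := by
  have h2 : 0 < 1 - q ^ 2 := by nlinarith
  have hsq : q ^ (1 - m) = (q ^ ((1 - m) / 2)) ^ 2 := by
    rw [← Real.rpow_natCast (q ^ ((1 - m) / 2)) 2, ← Real.rpow_mul hq0.le]
    norm_num
  calc Real.sqrt (qnum q m) ≤ Real.sqrt (q ^ (1 - m) / (1 - q ^ 2)) :=
        Real.sqrt_le_sqrt (qnum_le' hq0 hq1 m)
    _ = q ^ ((1 - m) / 2) / Real.sqrt (1 - q ^ 2) := by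
        rw [Real.sqrt_div (by positivity), hsq, Real.sqrt_sq (by positivity)]

lemma combine' {q : ℝ} (hq0 : 0 < q) (hq1 : q < 1) (A B C D E F : ℝ) :
    q ^ A * (q ^ B / Real.sqrt (1 - q^2)) *
      (q ^ C * (q ^ D / Real.sqrt (1 - q^2)) / (q ^ E * q ^ F)) =
      q ^ (A + B + C + D - E - F) / (1 - q^2) := by
  have h2 : 0 < 1 - q^2 := by nlinarith
  have hs0 : Real.sqrt (1-q^2) ≠ 0 := (Real.sqrt_pos.2 h2).ne'
  have hEF : (q : ℝ) ^ E ≠ 0 := by positivity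
  have hF' : (q : ℝ) ^ F ≠ 0 := by positivity
  have key : ∀ X Y : ℝ, q ^ X * q ^ Y = q ^ (X + Y) := fun X Y => (Real.rpow_add hq0 X Y).symm
  field_simp
  rw [Real.sq_sqrt h2.le]
  simp only [Real.rpow_sub hq0, Real.rpow_add hq0]
  field_simp

/-- There is `C > 0` depending only on `q` such that for all `n ∈ ½ℤ₊` with
`n ≥ 1/2`, `i ∈ {-n,…,n}`, `j ∈ {-n-1/2,…,n+1/2}`, minus the (1,2) entry of `a⁻_{nij}` satisfies
`0 ≤ q^((i+j-1/2)/2) [n-i]^(1/2) · q^(1/2) [n+j+1/2]^(1/2)/([2n][2n+1]) ≤ C·q^(2n)`. -/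
theorem aMinus_offdiagonal_estimate (q : ℝ) (hq0 : 0 < q) (hq1 : q < 1) :
    ∃ C : ℝ, 0 < C ∧ ∀ n i j : ℝ, HalfNat n → 1/2 ≤ n → IdxRange n i → JRangeOut n j →
      0 ≤ q ^ ((i + j - 1/2) / 2) * Real.sqrt (qnum q (n - i)) *
            (q ^ ((1:ℝ)/2) * Real.sqrt (qnum q (n + j + 1/2))
              / (qnum q (2*n) * qnum q (2*n + 1))) ∧
        q ^ ((i + j - 1/2) / 2) * Real.sqrt (qnum q (n - i)) *
            (q ^ ((1:ℝ)/2) * Real.sqrt (qnum q (n + j + 1/2))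
              / (qnum q (2*n) * qnum q (2*n + 1)))
          ≤ C * q ^ (2 * n) := by
  have h2 : 0 < 1 - q ^ 2 := by nlinarith
  refine ⟨(1 - q ^ 2)⁻¹, inv_pos.2 h2, ?_⟩
  intro n i j _ hn hi hj
  obtain ⟨⟨ki, hki⟩, hile⟩ := hi
  obtain ⟨⟨kj, hkj⟩, hjle⟩ := hj
  have hin : (0:ℝ) ≤ i + n := by rw [← hki]; exact Nat.cast_nonneg ki
  have hF : q ^ (1 - 2*n) ≤ qnum q (2*n) := qnum_ge' hq0 hq1 (by linarith)
  have hFpos : 0 < qnum q (2*n) := qnum_pos' hq0 hq1 (by linarith)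
  have hG : q ^ (-(2*n)) ≤ qnum q (2*n+1) := by
    have := qnum_ge' hq0 hq1 (show (1:ℝ) ≤ 2*n+1 by linarith)
    rwa [show 1 - (2*n+1) = -(2*n) by ring] at this
  have hGpos : 0 < qnum q (2*n+1) := qnum_pos' hq0 hq1 (by linarith)
  constructor
  · exact mul_nonneg
      (mul_nonneg (Real.rpow_pos_of_pos hq0 _).le (Real.sqrt_nonneg _))
      (div_nonneg (mul_nonneg (Real.rpow_pos_of_pos hq0 _).le (Real.sqrt_nonneg _))
        (mul_pos hFpos hGpos).le)
  · calc q ^ ((i + j - 1/2) / 2) * Real.sqrt (qnum q (n - i)) *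
            (q ^ ((1:ℝ)/2) * Real.sqrt (qnum q (n + j + 1/2))
              / (qnum q (2*n) * qnum q (2*n + 1)))
        ≤ q ^ ((i + j - 1/2) / 2) * (q ^ ((1 - (n - i)) / 2) / Real.sqrt (1 - q ^ 2)) *
            (q ^ ((1:ℝ)/2) * (q ^ ((1 - (n + j + 1/2)) / 2) / Real.sqrt (1 - q ^ 2))
              / (q ^ (1 - 2*n) * q ^ (-(2*n)))) := by
          gcongr <;> first
            | positivity
            | exact sqrt_qnum_le' hq0 hq1 _
      _ = q ^ ((i + j - 1/2) / 2 + (1 - (n - i)) / 2 + (1:ℝ)/2 + (1 - (n + j + 1/2)) / 2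
              - (1 - 2*n) - (-(2*n))) / (1 - q ^ 2) := combine' hq0 hq1 _ _ _ _ _ _
      _ = q ^ (3*n + i) / (1 - q ^ 2) := by rw [show (i + j - 1/2) / 2 + (1 - (n - i)) / 2
              + (1:ℝ)/2 + (1 - (n + j + 1/2)) / 2 - (1 - 2*n) - (-(2*n)) = 3*n + i by ring]
      _ ≤ q ^ (2*n) / (1 - q ^ 2) := by
          have hnum : q ^ (3*n + i) ≤ q ^ (2*n) :=
            Real.rpow_le_rpow_of_exponent_ge hq0 hq1.le (by linarith)
          exact div_le_div_of_nonneg_right hnum h2.le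
      _ = (1 - q ^ 2)⁻¹ * q ^ (2*n) := by rw [div_eq_mul_inv, mul_comm]
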